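/- For every (φ,φ̄) ∈ G(T,R), the subspace φ·W := φ(W^♯) ∩ V of V is E-commensurable of index k with W for some integer k. -/

import Mathlib

open Module Submodule

noncomputable section

abbrev TT : Type := (ℕ → ℂ) × (ℕ →₀ ℂ)
abbrev RR : Type := (ℕ →₀ ℂ) × (ℕ → ℂ)

lemma lc_v_add (v w : ℕ → ℂ) (l : ℕ →₀ ℂ) :
    Finsupp.linearCombination ℂ (v + w) l
      = Finsupp.linearCombination ℂ v l + Finsupp.linearCombination ℂ w l := by
  classical
  simp only [Finsupp.linearCombination_apply]
  rw [← Finsupp.sum_add]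
  exact Finsupp.sum_congr fun i _ => by simp [Pi.add_apply, smul_add, mul_add]

lemma lc_v_smul (c : ℂ) (v : ℕ → ℂ) (l : ℕ →₀ ℂ) :
    Finsupp.linearCombination ℂ (c • v) l = c • Finsupp.linearCombination ℂ v l := by
  classical
  simp only [Finsupp.linearCombination_apply, Finsupp.smul_sum]
  exact Finsupp.sum_congr fun i _ => by simp [Pi.smul_apply, smul_comm, smul_eq_mul, mul_left_comm]

/-- The nondegenerate pairing `p : T × R → ℂ`,
`p((ω,u),(w,ν)) = Σ_i ω(i)w(i) + Σ_i u(i)ν(i)`. -/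
def pairB : TT →ₗ[ℂ] RR →ₗ[ℂ] ℂ :=
  LinearMap.mk₂ ℂ
    (fun x y => Finsupp.linearCombination ℂ x.1 y.1 + Finsupp.linearCombination ℂ y.2 x.2)
    (fun x x' y => by
      simp only [Prod.fst_add, Prod.snd_add, lc_v_add, map_add]; ring)
    (fun c x y => by
      simp only [Prod.smul_fst, Prod.smul_snd, lc_v_smul, map_smul, smul_add])
    (fun x y y' => by
      simp only [Prod.fst_add, Prod.snd_add, lc_v_add, map_add]; ring)
    (fun c x y => by
      simp only [Prod.smul_fst, Prod.smul_snd, lc_v_smul, map_smul, smul_add])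

/-- The Mackey-group condition on a pair of automorphisms:
`p(φ x, y) = p(x, φ̄ y)` for all `x ∈ T`, `y ∈ R`. -/
def IsMackey (φ : TT ≃ₗ[ℂ] TT) (ψ : RR ≃ₗ[ℂ] RR) : Prop :=
  ∀ (x : TT) (y : RR), pairB (φ x) y = pairB x (ψ y)

/-- `W^♯ = (ℕ→ℂ) × {0} ⊆ T`. -/
def Wsharp : Submodule ℂ TT := LinearMap.range (LinearMap.inl ℂ (ℕ → ℂ) (ℕ →₀ ℂ))

/-- `U^♯ = {0} × (ℕ→ℂ) ⊆ R`. -/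
def Usharp : Submodule ℂ RR := LinearMap.range (LinearMap.inr ℂ (ℕ →₀ ℂ) (ℕ → ℂ))

/-- `V = (ℕ→₀ℂ) × (ℕ→₀ℂ) ⊆ T`. -/
def Vsub : Submodule ℂ TT :=
  LinearMap.range
    ((Finsupp.lcoeFun : (ℕ →₀ ℂ) →ₗ[ℂ] (ℕ → ℂ)).prodMap
      (LinearMap.id : (ℕ →₀ ℂ) →ₗ[ℂ] (ℕ →₀ ℂ)))

/-- `W = (ℕ→₀ℂ) × {0} ⊆ T`. -/
def Wsub : Submodule ℂ TT :=
  LinearMap.range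
    ((LinearMap.inl ℂ (ℕ → ℂ) (ℕ →₀ ℂ)).comp
      (Finsupp.lcoeFun : (ℕ →₀ ℂ) →ₗ[ℂ] (ℕ → ℂ)))

/-- `π_U : T → (ℕ→₀ℂ)`, the second projection. -/
def piU : TT →ₗ[ℂ] (ℕ →₀ ℂ) := LinearMap.snd ℂ (ℕ → ℂ) (ℕ →₀ ℂ)

/-- `π_{W*} : R → (ℕ→₀ℂ)`, the first projection. -/
def piW : RR →ₗ[ℂ] (ℕ →₀ ℂ) := LinearMap.fst ℂ (ℕ →₀ ℂ) (ℕ → ℂ)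

/-- The degree `d(φ) = dim π_U(φ(W^♯)) − dim π_U(φ^{-1}(W^♯))`. -/
def deg (φ : TT ≃ₗ[ℂ] TT) : ℤ :=
  (Module.finrank ℂ ((Wsharp.map φ.toLinearMap).map piU) : ℤ) -
    (Module.finrank ℂ ((Wsharp.map φ.symm.toLinearMap).map piU) : ℤ)

/-- `span {(δ_i, 0) : i ≥ n} ⊆ T`. -/
def tailSpan (n : ℕ) : Submodule ℂ TT :=
  Submodule.span ℂ
    ((fun i => ((((Finsupp.single i (1 : ℂ)) : ℕ →₀ ℂ) : ℕ → ℂ), (0 : ℕ →₀ ℂ))) '' {i | n ≤ i})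

/-- `W'` is E-commensurable of index `k` with `W`:
`W' = G ⊕ span{(δ_i,0) : i ≥ n}` with `G ⊆ V` finite-dimensional of dimension `n + k`. -/
def Ecomm (W' : Submodule ℂ TT) (k : ℤ) : Prop :=
  ∃ (n : ℕ) (G : Submodule ℂ TT), G ≤ Vsub ∧ FiniteDimensional ℂ G ∧
    (Module.finrank ℂ G : ℤ) = (n : ℤ) + k ∧ Disjoint G (tailSpan n) ∧
    W' = G ⊔ tailSpan n

/-- `W'^⊥ = {y ∈ R : p(x,y) = 0 for all x ∈ W'}`. -/
def perpR (W' : Submodule ℂ TT) : Submodule ℂ RR :=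
  ⨅ x ∈ (W' : Set TT), LinearMap.ker (pairB x)

/-- `Y^⊥ = {x ∈ T : p(x,y) = 0 for all y ∈ Y}`. -/
def perpT (Y : Submodule ℂ RR) : Submodule ℂ TT :=
  ⨅ y ∈ (Y : Set RR), LinearMap.ker (pairB.flip y)

/-- The action `φ·W' = φ((W'^⊥)^⊥) ∩ V`. -/
def actOn (φ : TT ≃ₗ[ℂ] TT) (W' : Submodule ℂ TT) : Submodule ℂ TT :=
  ((perpT (perpR W')).map φ.toLinearMap) ⊓ Vsub

end



section Aux

open Module Submodule

/-- Key uncountability lemma: if for every `ω : ℕ → ℂ` the pairing of `ω` against the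
family `v` is nonzero only finitely often, then `v j = 0` for all but finitely many `j`. -/
lemma aux_key (v : ℕ → (ℕ →₀ ℂ))
    (h : ∀ ω : ℕ → ℂ, {j | Finsupp.linearCombination ℂ ω (v j) ≠ 0}.Finite) :
    {j | v j ≠ 0}.Finite := by
  classical
  have hunc : Uncountable ℂ := Complex.ofReal_injective.uncountable
  set B : Set ℂ := ⋃ j, {t | v j ≠ 0 ∧ Polynomial.eval t (⟨AddMonoidAlgebra.ofCoeff (v j)⟩ : Polynomial ℂ) = 0} with hBdef
  have hB : B.Countable := by
    refine Set.countable_iUnion fun j => ?_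
    by_cases hvj : v j = 0
    · simp [hvj]
    · refine Set.Countable.mono ?_ (Polynomial.finite_setOf_isRoot
        (p := (⟨AddMonoidAlgebra.ofCoeff (v j)⟩ : Polynomial ℂ)) (by simpa [Polynomial.ofFinsupp_eq_zero] using hvj)).countable
      intro t ht; exact ht.2
  obtain ⟨t, ht⟩ : ∃ t, t ∉ B := by
    by_contra h'
    push_neg at h'
    exact Set.not_countable_univ (by rwa [Set.eq_univ_of_forall h'] at hB)
  refine (h fun i => t ^ i).subset ?_
  intro j hj
  have heval : Finsupp.linearCombination ℂ (fun i => t ^ i) (v j)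
      = Polynomial.eval t (⟨AddMonoidAlgebra.ofCoeff (v j)⟩ : Polynomial ℂ) := by
    rw [Finsupp.linearCombination_apply, Polynomial.eval_eq_sum, Polynomial.sum_def,
      Polynomial.support_ofFinsupp, Polynomial.coeff_ofFinsupp, Finsupp.sum]
    exact Finset.sum_congr rfl fun i _ => by simp [smul_eq_mul]
  intro h0
  exact ht (Set.mem_iUnion.2 ⟨j, hj, by rw [← heval]; exact h0⟩)

lemma aux_lc_delta (j : ℕ) (u : ℕ →₀ ℂ) :
    Finsupp.linearCombination ℂ (((Finsupp.single j (1:ℂ)) : ℕ →₀ ℂ) : ℕ → ℂ) u = u j := by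
  classical
  rw [Finsupp.linearCombination_apply, Finsupp.sum]
  rw [Finset.sum_eq_single j]
  · by_cases hj : j ∈ u.support <;> simp_all [Finsupp.single_apply]
  · intro i _ hij; simp [Finsupp.single_apply, Ne.symm hij]
  · intro hj; simp_all [Finsupp.single_apply]

lemma aux_eventually_zero {f : ℕ → (ℕ →₀ ℂ)} (hf : {i | f i ≠ 0}.Finite) :
    ∃ n, ∀ i, n ≤ i → f i = 0 := by
  obtain ⟨b, hb⟩ := hf.bddAbove
  refine ⟨b + 1, fun i hi => ?_⟩
  by_contra h0
  exact absurd (hb h0) (by omega)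

lemma aux_mackey_id (φ : TT ≃ₗ[ℂ] TT) (ψ : RR ≃ₗ[ℂ] RR) (h : IsMackey φ ψ)
    (ω ν : ℕ → ℂ) :
    Finsupp.linearCombination ℂ ν (φ (ω, 0)).2
      = Finsupp.linearCombination ℂ ω (ψ (0, ν)).1 := by
  have := h (ω, 0) (0, ν)
  simpa [pairB, LinearMap.mk₂_apply, map_zero] using this

lemma aux_mackey_symm (φ : TT ≃ₗ[ℂ] TT) (ψ : RR ≃ₗ[ℂ] RR) (h : IsMackey φ ψ) :
    IsMackey φ.symm ψ.symm := by
  intro x y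
  have := h (φ.symm x) (ψ.symm y)
  simpa using this.symm

/-- The embedding `(ℕ→₀ℂ) → T`, `w ↦ (↑w, 0)`. -/
noncomputable def auxσ : (ℕ →₀ ℂ) →ₗ[ℂ] TT :=
  (LinearMap.inl ℂ (ℕ → ℂ) (ℕ →₀ ℂ)).comp Finsupp.lcoeFun

lemma aux_tailSpan_eq (n : ℕ) :
    tailSpan n = (Finsupp.supported ℂ ℂ {i | n ≤ i}).map auxσ := by
  unfold tailSpan
  rw [Finsupp.supported_eq_span_single, Submodule.map_span, ← Set.image_comp]
  rfl

lemma aux_mem_tailSpan {n : ℕ} {w : ℕ →₀ ℂ} (hw : ∀ i, i < n → w i = 0) :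
    ((w : ℕ → ℂ), (0 : ℕ →₀ ℂ)) ∈ tailSpan n := by
  rw [aux_tailSpan_eq]
  refine ⟨w, ?_, rfl⟩
  rw [SetLike.mem_coe, Finsupp.mem_supported]
  intro i hi
  simp only [Finset.mem_coe, Finsupp.mem_support_iff] at hi
  by_contra hn
  exact hi (hw i (by simpa using hn))

end Aux

/-- For every `(φ,φ̄) ∈ G(T,R)`, the subspace `φ·W = φ(W^♯) ∩ V` is
E-commensurable of some index `k` with `W`. -/
theorem stmt4 (φ : TT ≃ₗ[ℂ] TT) (ψ : RR ≃ₗ[ℂ] RR) (h : IsMackey φ ψ) :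
    ∃ k : ℤ, Ecomm ((Wsharp.map φ.toLinearMap) ⊓ Vsub) k := by
  classical
  set W' := (Wsharp.map φ.toLinearMap) ⊓ Vsub with hW'
  -- finite rank of the lower-left block of φ
  have hid := aux_mackey_id φ ψ h
  set v : ℕ → (ℕ →₀ ℂ) :=
    fun j => (ψ (0, (((Finsupp.single j (1:ℂ)) : ℕ →₀ ℂ) : ℕ → ℂ))).1 with hv
  have hCval : ∀ (ω : ℕ → ℂ) (j : ℕ),
      (φ (ω, 0)).2 j = Finsupp.linearCombination ℂ ω (v j) := by
    intro ω j
    rw [← hid ω _, aux_lc_delta]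
  obtain ⟨m, hm⟩ : ∃ m, ∀ j, m ≤ j → v j = 0 := by
    refine aux_eventually_zero (aux_key v fun ω => ?_)
    refine (((φ (ω, 0)).2.support : Finset ℕ).finite_toSet).subset fun j hj => ?_
    simp only [Set.mem_setOf_eq] at hj
    rw [← hCval] at hj
    exact Finset.mem_coe.2 (Finsupp.mem_support_iff.2 hj)
  have hC0 : ∀ (ω : ℕ → ℂ) (j : ℕ), m ≤ j → (φ (ω, 0)).2 j = 0 := by
    intro ω j hj
    rw [hCval, hm j hj, map_zero]
  -- eventual vanishing of the lower-left block of φ⁻¹ on delta vectors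
  have hid' := aux_mackey_id φ.symm ψ.symm (aux_mackey_symm φ ψ h)
  set u : ℕ → (ℕ →₀ ℂ) :=
    fun i => (φ.symm ((((Finsupp.single i (1:ℂ)) : ℕ →₀ ℂ) : ℕ → ℂ), 0)).2 with hu
  obtain ⟨n, hn⟩ : ∃ n, ∀ i, n ≤ i → u i = 0 := by
    refine aux_eventually_zero (aux_key u fun ν => ?_)
    refine ((((ψ.symm (0, ν)).1).support : Finset ℕ).finite_toSet).subset fun i hi => ?_
    simp only [Set.mem_setOf_eq] at hi
    rw [hid' _ ν, aux_lc_delta] at hi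
    exact Finset.mem_coe.2 (Finsupp.mem_support_iff.2 hi)
  -- tailSpan n ≤ W'
  have htail : tailSpan n ≤ W' := by
    unfold tailSpan
    rw [Submodule.span_le]
    rintro x ⟨i, hi, rfl⟩
    refine Submodule.mem_inf.2 ⟨?_, ⟨(Finsupp.single i 1, 0), rfl⟩⟩
    refine Submodule.mem_map.2
      ⟨φ.symm ((((Finsupp.single i (1:ℂ)) : ℕ →₀ ℂ) : ℕ → ℂ), 0), ?_, by simp⟩
    refine ⟨(φ.symm ((((Finsupp.single i (1:ℂ)) : ℕ →₀ ℂ) : ℕ → ℂ), 0)).1, ?_⟩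
    exact Prod.ext rfl ((hn i hi).symm)
  -- the finite-dimensional "window" map
  set F : TT →ₗ[ℂ] (Fin n → ℂ) × (Fin m → ℂ) :=
    LinearMap.prodMap (LinearMap.funLeft ℂ ℂ (Fin.val))
      ((LinearMap.funLeft ℂ ℂ (Fin.val)).comp Finsupp.lcoeFun) with hF
  have hker : W' ⊓ LinearMap.ker F ≤ tailSpan n := by
    rintro ⟨x1, x2⟩ ⟨⟨hmap, hV⟩, hFx⟩
    obtain ⟨⟨a, b⟩, hab⟩ := hV
    obtain ⟨y, hy, hyx⟩ := Submodule.mem_map.1 hmap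
    obtain ⟨ω, hω⟩ := hy
    have hx2big : ∀ j, m ≤ j → x2 j = 0 := by
      intro j hj
      rw [← hω] at hyx
      have h2 : (φ (ω, 0)).2 = x2 := congrArg Prod.snd hyx
      rw [← h2]
      exact hC0 ω j hj
    have hFx' : F (x1, x2) = 0 := hFx
    have hF1 : ∀ i : Fin n, x1 i = 0 := by
      intro i
      have := congrArg (fun z => z.1 i) hFx'
      simpa [hF, LinearMap.funLeft] using this
    have hF2 : ∀ i : Fin m, x2 i = 0 := by
      intro i
      have := congrArg (fun z => z.2 i) hFx'
      simpa [hF, LinearMap.funLeft] using this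
    have hx2 : x2 = 0 := by
      ext j
      by_cases hjm : j < m
      · exact hF2 ⟨j, hjm⟩
      · exact hx2big j (by omega)
    have ha : ∀ i, i < n → a i = 0 := by
      intro i hi
      have h1 : (a : ℕ → ℂ) = x1 := congrArg Prod.fst hab
      have := hF1 ⟨i, hi⟩
      rw [← h1] at this
      exact this
    have := aux_mem_tailSpan ha
    have h1 : (a : ℕ → ℂ) = x1 := congrArg Prod.fst hab
    rw [h1, ← hx2] at this
    exact this
  -- choose a complement of tailSpan n inside W' via a global complement
  obtain ⟨c, hc⟩ := Submodule.exists_isCompl (tailSpan n)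
  set G := W' ⊓ c with hG
  have hGle : G ≤ W' := inf_le_left
  have hsup : W' = G ⊔ tailSpan n := by
    have hassoc := sup_inf_assoc_of_le (α := Submodule ℂ TT) (x := tailSpan n)
      (y := c) (z := W') htail
    rw [hc.sup_eq_top, top_inf_eq] at hassoc
    rw [hassoc, hG, inf_comm, sup_comm]
  have hdisj : Disjoint G (tailSpan n) :=
    (hc.disjoint.symm).mono_left inf_le_right
  have hfinG : FiniteDimensional ℂ G := by
    refine FiniteDimensional.of_injective (F.comp G.subtype) ?_
    refine (injective_iff_map_eq_zero _).2 fun x hx => ?_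
    have hxW : (x : TT) ∈ W' := hGle x.2
    have hxF : (x : TT) ∈ LinearMap.ker F := by
      simpa using hx
    have hxtail : (x : TT) ∈ tailSpan n := hker ⟨hxW, hxF⟩
    have hxc : (x : TT) ∈ c := x.2.2
    have : (x : TT) ∈ tailSpan n ⊓ c := ⟨hxtail, hxc⟩
    rw [hc.inf_eq_bot] at this
    exact Subtype.ext (by simpa using this)
  refine ⟨(Module.finrank ℂ G : ℤ) - n, n, G, hGle.trans inf_le_right, hfinG,
    by ring, hdisj, hsup⟩
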